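/- Let (A, ∂) be a DGA over Z/2 and (S(A), ∂') its stabilization by generators x (degree m) and y (degree m-1) with ∂'x = y. Two augmentations ε₁, ε₂ of S(A) are chain homotopic if and only if their restrictions to A are chain homotopic. Consequently, restriction induces a bijection between homotopy classes of augmentations of S(A) and homotopy classes of augmentations of A. -/

import Mathlib

open scoped Classical

noncomputable section

abbrev F2 := ZMod 2
abbrev FreeDGA (n : ℕ) := MonoidAlgebra F2 (FreeMonoid (Fin n))

/-- The generator `q_i` as an element of the free algebra. -/
def genr {n : ℕ} (q : Fin n) : FreeDGA n := MonoidAlgebra.single (FreeMonoid.of q) 1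

/-- Degree of a word: sum of the degrees of its letters. -/
def wdeg {n : ℕ} (deg : Fin n → ℤ) (w : FreeMonoid (Fin n)) : ℤ :=
  (FreeMonoid.toList w |>.map deg).sum

/-- A free DGA over `Z/2` on `n` graded generators with a degree `-1` differential
satisfying `∂² = 0` and the Leibniz rule. -/
structure DGA (n : ℕ) where
  deg : Fin n → ℤ
  d : FreeDGA n →ₗ[F2] FreeDGA n
  d_sq : ∀ x, d (d x) = 0
  leibniz : ∀ a b, d (a * b) = d a * b + a * d b
  d_deg : ∀ (q : Fin n) (w : FreeMonoid (Fin n)), (d (genr q)).coeff w ≠ 0 → wdeg deg w = deg q - 1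

/-- An augmentation: an algebra map to `Z/2` with `ε∘∂ = 0` (and `ε 1 = 1`, automatic for
algebra maps) that vanishes on generators of nonzero degree. -/
structure Aug {n : ℕ} (A : DGA n) where
  eps : FreeDGA n →ₐ[F2] F2
  aug_d : ∀ x, eps (A.d x) = 0
  aug_supp : ∀ q, A.deg q ≠ 0 → eps (genr q) = 0

/-- A chain homotopy from `e` to `e'`: a degree `1` linear map (vanishing on monomials of
degree `≠ -1`) with `e - e' = H∘∂` and the `(e,e')`-derivation rule (over `Z/2`, `-` is `+`). -/
def IsHomotopy {n : ℕ} (A : DGA n) (e e' : FreeDGA n →ₐ[F2] F2)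
    (H : FreeDGA n →ₗ[F2] F2) : Prop :=
  (∀ w : FreeMonoid (Fin n), wdeg A.deg w ≠ -1 → H (MonoidAlgebra.single w 1) = 0) ∧
  (∀ x, e x + e' x = H (A.d x)) ∧
  (∀ a b, H (a * b) = H a * e' b + e a * H b)

/-- The inclusion of the free algebra on `n` generators into the one on `n+2` generators
(the stabilization), induced by `Fin.castAdd 2`. -/
def inclTwo (n : ℕ) : FreeDGA n →ₐ[F2] FreeDGA (n + 2) :=
  MonoidAlgebra.mapDomainAlgHom F2 F2 (FreeMonoid.map (Fin.castAdd 2))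

lemma genr_mul_single {n : ℕ} (q : Fin n) (w : FreeMonoid (Fin n)) :
    genr q * MonoidAlgebra.single w 1 = MonoidAlgebra.single (FreeMonoid.of q * w) 1 := by
  simp [genr, MonoidAlgebra.single_mul_single]
lemma single_one_eq {n : ℕ} : (MonoidAlgebra.single (1 : FreeMonoid (Fin n)) 1 : FreeDGA n) = 1 :=
  (MonoidAlgebra.one_def).symm
lemma single_ofList_append {n : ℕ} (u v : List (Fin n)) :
    (MonoidAlgebra.single (FreeMonoid.ofList (u ++ v)) 1 : FreeDGA n)
      = MonoidAlgebra.single (FreeMonoid.ofList u) 1 * MonoidAlgebra.single (FreeMonoid.ofList v) 1 := by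
  rw [FreeMonoid.ofList_append, MonoidAlgebra.single_mul_single, one_mul]
lemma single_ofList_cons {n : ℕ} (q : Fin n) (w : List (Fin n)) :
    (MonoidAlgebra.single (FreeMonoid.ofList (q :: w)) 1 : FreeDGA n)
      = genr q * MonoidAlgebra.single (FreeMonoid.ofList w) 1 := by
  rw [genr_mul_single]; rfl
lemma wdeg_one {n : ℕ} (deg : Fin n → ℤ) : wdeg deg 1 = 0 := rfl
lemma wdeg_cons {n : ℕ} (deg : Fin n → ℤ) (q : Fin n) (w : FreeMonoid (Fin n)) :
    wdeg deg (FreeMonoid.of q * w) = deg q + wdeg deg w := by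
  simp [wdeg, FreeMonoid.toList_of_mul]
lemma single_eq_smul {n : ℕ} (w : FreeMonoid (Fin n)) (c : F2) :
    (MonoidAlgebra.single w c : FreeDGA n) = c • MonoidAlgebra.single w 1 := by
  rw [MonoidAlgebra.smul_single', mul_one]

lemma d_one {n : ℕ} (A : DGA n) : A.d 1 = 0 := by
  have h := A.leibniz 1 1
  simp only [one_mul, mul_one] at h
  exact (left_eq_add.mp h)

lemma eps_single_ne {n : ℕ} {A : DGA n} (e : Aug A) (w : FreeMonoid (Fin n))
    (h : e.eps (MonoidAlgebra.single w 1) ≠ 0) : wdeg A.deg w = 0 := by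
  induction w using FreeMonoid.inductionOn' with
  | one => exact wdeg_one _
  | of_mul q w ih =>
    rw [← genr_mul_single, map_mul] at h
    have h1 : e.eps (genr q) ≠ 0 := fun h0 => h (by rw [h0, zero_mul])
    have h2 : e.eps (MonoidAlgebra.single w 1) ≠ 0 := fun h0 => h (by rw [h0, mul_zero])
    have hd : A.deg q = 0 := by by_contra hd; exact h1 (e.aug_supp q hd)
    rw [wdeg_cons, hd, ih h2, add_zero]

def hword {n : ℕ} (hg e1g : Fin n → F2) (e2 : FreeDGA n →ₐ[F2] F2) : List (Fin n) → F2
  | [] => 0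
  | q :: w => hg q * e2 (MonoidAlgebra.single (FreeMonoid.ofList w) 1)
      + e1g q * hword hg e1g e2 w

def Hext {n : ℕ} (h : FreeMonoid (Fin n) → F2) : FreeDGA n →ₗ[F2] F2 :=
  (Finsupp.lsum F2 (fun w => LinearMap.toSpanSingleton F2 F2 (h w))).comp
    (MonoidAlgebra.coeffLinearEquiv F2).toLinearMap

lemma Hext_single {n : ℕ} (h : FreeMonoid (Fin n) → F2) (w : FreeMonoid (Fin n)) :
    Hext h (MonoidAlgebra.single w 1) = h w := by
  rw [Hext, LinearMap.comp_apply, LinearEquiv.coe_coe, MonoidAlgebra.coeffLinearEquiv_apply,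
    MonoidAlgebra.coeff_single]; erw [Finsupp.lsum_single]; rw [LinearMap.toSpanSingleton_apply, one_smul]

lemma hword_append {n : ℕ} (hg : Fin n → F2) (e1 e2 : FreeDGA n →ₐ[F2] F2)
    (u v : List (Fin n)) :
    hword hg (fun q => e1 (genr q)) e2 (u ++ v)
      = hword hg (fun q => e1 (genr q)) e2 u * e2 (MonoidAlgebra.single (FreeMonoid.ofList v) 1)
        + e1 (MonoidAlgebra.single (FreeMonoid.ofList u) 1) * hword hg (fun q => e1 (genr q)) e2 v := by
  induction u with
  | nil =>
    show hword hg _ e2 v = 0 * _ + e1 (MonoidAlgebra.single (1 : FreeMonoid (Fin n)) 1) * _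
    rw [single_one_eq, map_one, zero_mul, one_mul, zero_add]
  | cons q u ih =>
    show hg q * e2 (MonoidAlgebra.single (FreeMonoid.ofList (u ++ v)) 1)
        + e1 (genr q) * hword hg (fun q => e1 (genr q)) e2 (u ++ v) = _
    rw [single_ofList_append, map_mul, ih, single_ofList_cons, map_mul]
    show _ = (hg q * e2 (MonoidAlgebra.single (FreeMonoid.ofList u) 1)
        + e1 (genr q) * hword hg (fun q => e1 (genr q)) e2 u) * _ + _
    ring

lemma Hext_mul {n : ℕ} (hg : Fin n → F2) (e1 e2 : FreeDGA n →ₐ[F2] F2) (a b : FreeDGA n) :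
    Hext (fun w => hword hg (fun q => e1 (genr q)) e2 (FreeMonoid.toList w)) (a * b)
      = Hext (fun w => hword hg (fun q => e1 (genr q)) e2 (FreeMonoid.toList w)) a * e2 b
        + e1 a * Hext (fun w => hword hg (fun q => e1 (genr q)) e2 (FreeMonoid.toList w)) b := by
  set H := Hext (fun w => hword hg (fun q => e1 (genr q)) e2 (FreeMonoid.toList w)) with hH
  induction a using MonoidAlgebra.induction_linear generalizing b with
  | zero => simp
  | add f g hf hg2 => simp only [add_mul, map_add, hf, hg2]; ring
  | single w c =>
    induction b using MonoidAlgebra.induction_linear with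
    | zero => simp
    | add f g hf hg2 => simp only [mul_add, map_add, hf, hg2]; ring
    | single v c' =>
      have key : H (MonoidAlgebra.single w 1 * MonoidAlgebra.single v 1)
          = H (MonoidAlgebra.single w 1) * e2 (MonoidAlgebra.single v 1)
            + e1 (MonoidAlgebra.single w 1) * H (MonoidAlgebra.single v 1) := by
        rw [MonoidAlgebra.single_mul_single, one_mul, hH, Hext_single, Hext_single, Hext_single]
        have h2 : FreeMonoid.toList (w * v) = FreeMonoid.toList w ++ FreeMonoid.toList v := rfl
        rw [h2, hword_append]
        rfl
      have hc : ∀ t : F2, t = 0 ∨ t = 1 := by decide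
      rcases hc c with rfl | rfl
      · simp
      rcases hc c' with rfl | rfl
      · simp
      exact key

lemma inclTwo_single {n : ℕ} (w : FreeMonoid (Fin n)) :
    inclTwo n (MonoidAlgebra.single w 1)
      = MonoidAlgebra.single (FreeMonoid.map (Fin.castAdd 2) w) 1 :=
  MonoidAlgebra.mapDomain_single

lemma inclTwo_genr {n : ℕ} (q : Fin n) :
    inclTwo n (genr q) = genr (Fin.castAdd 2 q) := by
  rw [genr, inclTwo_single]; rfl

lemma wdeg_map {n : ℕ} (dB : Fin (n+2) → ℤ) (dA : Fin n → ℤ)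
    (h : ∀ q, dB (Fin.castAdd 2 q) = dA q) (w : FreeMonoid (Fin n)) :
    wdeg dB (FreeMonoid.map (Fin.castAdd 2) w) = wdeg dA w := by
  simp [wdeg, FreeMonoid.toList_map, List.map_map, Function.comp_def, h]

lemma algHom_ext_genr {n : ℕ} {φ ψ : FreeDGA n →ₐ[F2] F2}
    (h : ∀ q, φ (genr q) = ψ (genr q)) : φ = ψ := by
  apply MonoidAlgebra.algHom_ext ?_ (Subsingleton.elim _ _)
  intro w
  induction w using FreeMonoid.inductionOn' with
  | one => rw [single_one_eq, map_one, map_one]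
  | of_mul q w ih => rw [← genr_mul_single, map_mul, map_mul, h, ih]

lemma wdeg_of {n : ℕ} (deg : Fin n → ℤ) (q : Fin n) : wdeg deg (FreeMonoid.of q) = deg q := by
  simp [wdeg]

section Part2
variable {n : ℕ} (A : DGA n) (B : DGA (n + 2))

lemma part2 (hdx : B.d (genr ⟨n, by simp⟩) = genr ⟨n + 1, by simp⟩)
    (hdy : B.d (genr ⟨n + 1, by simp⟩) = 0)
    (hdegcompat : ∀ q : Fin n, B.deg (Fin.castAdd 2 q) = A.deg q)
    (hrestrict : ∀ a : FreeDGA n, B.d (inclTwo n a) = inclTwo n (A.d a)) :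
    ∀ eA : Aug A, ∃ eS : Aug B, ∀ a : FreeDGA n, eS.eps (inclTwo n a) = eA.eps a := by
  intro eA
  set g : Fin (n+2) → F2 := fun q =>
    if h : (q : ℕ) < n then eA.eps (genr ⟨q, h⟩) else 0 with hgdef
  set εS : FreeDGA (n+2) →ₐ[F2] F2 :=
    MonoidAlgebra.lift F2 F2 (FreeMonoid (Fin (n+2))) (FreeMonoid.lift g) with hεS
  have hgen : ∀ q : Fin (n+2), εS (genr q) = g q := by
    intro q
    rw [hεS, genr]
    rw [MonoidAlgebra.lift_single]
    rw [show (FreeMonoid.lift g) (FreeMonoid.of q) = g q from rfl, one_smul]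
  have hrest : ∀ a : FreeDGA n, εS (inclTwo n a) = eA.eps a := by
    have : εS.comp (inclTwo n) = eA.eps := by
      apply algHom_ext_genr
      intro q
      rw [AlgHom.comp_apply, inclTwo_genr, hgen]
      simp only [hgdef, Fin.coe_castAdd, Fin.is_lt, dif_pos, Fin.eta]
    intro a; rw [← this]; rfl
  have hd_gen : ∀ q : Fin (n+2), εS (B.d (genr q)) = 0 := by
    intro q
    by_cases h1 : (q : ℕ) < n
    · have hq : q = Fin.castAdd 2 ⟨(q : ℕ), h1⟩ := Fin.ext rfl
      rw [hq, ← inclTwo_genr, hrestrict, hrest]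
      exact eA.aug_d _
    · by_cases h2 : (q : ℕ) = n
      · have hq : q = ⟨n, by omega⟩ := Fin.ext h2
        rw [hq, hdx, hgen]
        rw [hgdef]
        simp only []
        rw [dif_neg (by simp)]
      · have h3 : (q : ℕ) = n + 1 := by have := q.isLt; omega
        have hq : q = ⟨n + 1, by omega⟩ := Fin.ext h3
        rw [hq, hdy, map_zero]
  have hd_mono : ∀ w : FreeMonoid (Fin (n+2)), εS (B.d (MonoidAlgebra.single w 1)) = 0 := by
    intro w
    induction w using FreeMonoid.inductionOn' with
    | one => rw [single_one_eq, d_one, map_zero]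
    | of_mul q w ih =>
      rw [← genr_mul_single, B.leibniz, map_add, map_mul, map_mul, ih, hd_gen, zero_mul,
        mul_zero, add_zero]
  have hd_all : ∀ z, εS (B.d z) = 0 := by
    intro z
    induction z using MonoidAlgebra.induction_linear with
    | zero => rw [map_zero, map_zero]
    | add f g hf hg => rw [map_add, map_add, hf, hg, add_zero]
    | single w c =>
      have hc : ∀ t : F2, t = 0 ∨ t = 1 := by decide
      rcases hc c with rfl | rfl
      · rw [MonoidAlgebra.single_zero, map_zero, map_zero]
      · exact hd_mono w
  refine ⟨⟨εS, hd_all, ?_⟩, hrest⟩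
  intro q hq
  rw [hgen, hgdef]
  simp only []
  by_cases h1 : (q : ℕ) < n
  · rw [dif_pos h1]
    apply eA.aug_supp
    have hq2 : Fin.castAdd 2 ⟨(q:ℕ), h1⟩ = q := Fin.ext rfl
    rw [← hdegcompat ⟨(q:ℕ), h1⟩, hq2] at *
    exact hq
  · rw [dif_neg h1]
end Part2

section Part1
variable {n : ℕ} (A : DGA n) (B : DGA (n + 2))

lemma part1_fwd (hdegcompat : ∀ q : Fin n, B.deg (Fin.castAdd 2 q) = A.deg q)
    (hrestrict : ∀ a : FreeDGA n, B.d (inclTwo n a) = inclTwo n (A.d a))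
    (e1 e2 : Aug B) (H : FreeDGA (n+2) →ₗ[F2] F2) (hH : IsHomotopy B e1.eps e2.eps H) :
    IsHomotopy A (e1.eps.comp (inclTwo n)) (e2.eps.comp (inclTwo n))
      (H.comp (inclTwo n).toLinearMap) := by
  obtain ⟨hdeg, hd, hmul⟩ := hH
  refine ⟨?_, ?_, ?_⟩
  · intro w hw
    simp only [LinearMap.comp_apply, AlgHom.toLinearMap_apply]
    rw [inclTwo_single]
    exact hdeg _ (by rw [wdeg_map B.deg A.deg hdegcompat]; exact hw)
  · intro a
    simp only [LinearMap.comp_apply, AlgHom.toLinearMap_apply, AlgHom.comp_apply]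
    rw [← hrestrict]
    exact hd _
  · intro a b
    simp only [LinearMap.comp_apply, AlgHom.toLinearMap_apply, AlgHom.comp_apply, map_mul]
    exact hmul _ _
end Part1

lemma hword_singleton {n : ℕ} (hg e1g : Fin n → F2) (e2 : FreeDGA n →ₐ[F2] F2) (q : Fin n) :
    hword hg e1g e2 [q] = hg q := by
  show hg q * e2 (MonoidAlgebra.single (FreeMonoid.ofList []) 1) + e1g q * 0 = hg q
  rw [show (FreeMonoid.ofList [] : FreeMonoid (Fin n)) = 1 from rfl, single_one_eq, map_one,
    mul_one, mul_zero, add_zero]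

section Part1b
variable {n : ℕ} (m : ℤ) (A : DGA n) (B : DGA (n + 2))

set_option maxHeartbeats 1000000 in
lemma part1_bwd (hdegcompat : ∀ q : Fin n, B.deg (Fin.castAdd 2 q) = A.deg q)
    (hdegx : B.deg ⟨n, by simp⟩ = m)
    (hdegy : B.deg ⟨n + 1, by simp⟩ = m - 1)
    (hdx : B.d (genr ⟨n, by simp⟩) = genr ⟨n + 1, by simp⟩)
    (hdy : B.d (genr ⟨n + 1, by simp⟩) = 0)
    (hrestrict : ∀ a : FreeDGA n, B.d (inclTwo n a) = inclTwo n (A.d a))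
    (e1 e2 : Aug B) (H' : FreeDGA n →ₗ[F2] F2)
    (hH' : IsHomotopy A (e1.eps.comp (inclTwo n)) (e2.eps.comp (inclTwo n)) H') :
    ∃ H, IsHomotopy B e1.eps e2.eps H := by
  obtain ⟨h'deg, h'd, h'mul⟩ := hH'
  set hg : Fin (n+2) → F2 := fun q =>
    if h : (q : ℕ) < n then H' (genr ⟨(q : ℕ), h⟩)
    else if (q : ℕ) = n then 0
    else e1.eps (genr ⟨n, by omega⟩) + e2.eps (genr ⟨n, by omega⟩) with hgdef
  set H : FreeDGA (n+2) →ₗ[F2] F2 :=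
    Hext (fun w => hword hg (fun q => e1.eps (genr q)) e2.eps (FreeMonoid.toList w)) with hHdef
  have Hsingle : ∀ w, H (MonoidAlgebra.single w 1)
      = hword hg (fun q => e1.eps (genr q)) e2.eps (FreeMonoid.toList w) :=
    fun w => Hext_single _ w
  have Hmul : ∀ a b, H (a * b) = H a * e2.eps b + e1.eps a * H b :=
    fun a b => Hext_mul hg e1.eps e2.eps a b
  have Hgenr : ∀ q, H (genr q) = hg q := by
    intro q
    rw [genr, Hsingle]
    exact hword_singleton hg _ e2.eps q
  have hg_cast : ∀ p : Fin n, hg (Fin.castAdd 2 p) = H' (genr p) := by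
    intro p
    simp only [hgdef, Fin.coe_castAdd, Fin.is_lt, dif_pos, Fin.eta]
  have H'one : H' 1 = 0 := by
    have h := h'mul 1 1
    simp only [one_mul, mul_one, map_one] at h
    exact (left_eq_add.mp h)
  have H_one : H 1 = 0 := by
    rw [← single_one_eq, Hsingle]; rfl
  have H_incl_mono : ∀ w : FreeMonoid (Fin n),
      H (inclTwo n (MonoidAlgebra.single w 1)) = H' (MonoidAlgebra.single w 1) := by
    intro w
    induction w using FreeMonoid.inductionOn' with
    | one => rw [single_one_eq, map_one, H_one, H'one]
    | of_mul p w ih =>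
      rw [← genr_mul_single, map_mul, Hmul, h'mul]
      rw [inclTwo_genr, Hgenr, hg_cast, ih]
      rw [AlgHom.comp_apply, AlgHom.comp_apply, inclTwo_genr]
  have H_incl : ∀ a, H (inclTwo n a) = H' a := by
    intro a
    induction a using MonoidAlgebra.induction_linear with
    | zero => rw [map_zero, map_zero, map_zero]
    | add f g hf hg2 => rw [map_add, map_add, map_add, hf, hg2]
    | single w c =>
      have hc : ∀ t : F2, t = 0 ∨ t = 1 := by decide
      rcases hc c with rfl | rfl
      · rw [MonoidAlgebra.single_zero, map_zero, map_zero, map_zero]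
      · exact H_incl_mono w
  have Hgen_d : ∀ q : Fin (n+2), H (B.d (genr q)) = e1.eps (genr q) + e2.eps (genr q) := by
    intro q
    by_cases h1 : (q : ℕ) < n
    · have hq : q = Fin.castAdd 2 ⟨(q : ℕ), h1⟩ := Fin.ext rfl
      rw [hq, ← inclTwo_genr, hrestrict, H_incl, ← h'd]
      rw [AlgHom.comp_apply, AlgHom.comp_apply, inclTwo_genr]
    · by_cases h2 : (q : ℕ) = n
      · have hq : q = ⟨n, by omega⟩ := Fin.ext h2
        rw [hq, hdx, Hgenr]
        simp only [hgdef]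
        rw [dif_neg (by omega), if_neg (by omega)]
      · have h3 : (q : ℕ) = n + 1 := by have := q.isLt; omega
        have hq : q = ⟨n + 1, by omega⟩ := Fin.ext h3
        rw [hq, hdy, map_zero, ← hdx, e1.aug_d, e2.aug_d, add_zero]
  have two0 : (2 : F2) = 0 := rfl
  have main_mono : ∀ w, e1.eps (MonoidAlgebra.single w 1) + e2.eps (MonoidAlgebra.single w 1)
      = H (B.d (MonoidAlgebra.single w 1)) := by
    intro w
    induction w using FreeMonoid.inductionOn' with
    | one =>
      rw [single_one_eq, d_one, map_zero, map_one, map_one]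
      decide
    | of_mul q w ih =>
      rw [← genr_mul_single, B.leibniz, map_add, Hmul, Hmul, e1.aug_d, e2.aug_d, Hgen_d,
        ← ih, map_mul, map_mul]
      linear_combination (-(e1.eps (genr q) * e2.eps (MonoidAlgebra.single w 1))) * two0
  have main_all : ∀ z, e1.eps z + e2.eps z = H (B.d z) := by
    intro z
    induction z using MonoidAlgebra.induction_linear with
    | zero => rw [map_zero, map_zero, map_zero, map_zero, add_zero]
    | add f g hf hg2 =>
      rw [map_add, map_add, map_add, map_add, ← hf, ← hg2]
      ring
    | single w c =>
      have hc : ∀ t : F2, t = 0 ∨ t = 1 := by decide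
      rcases hc c with rfl | rfl
      · rw [MonoidAlgebra.single_zero, map_zero, map_zero, map_zero, map_zero, add_zero]
      · exact main_mono w
  have e1deg : ∀ q : Fin (n+2), e1.eps (genr q) ≠ 0 → B.deg q = 0 := by
    intro q h; by_contra hd; exact h (e1.aug_supp q hd)
  have e2deg : ∀ q : Fin (n+2), e2.eps (genr q) ≠ 0 → B.deg q = 0 := by
    intro q h; by_contra hd; exact h (e2.aug_supp q hd)
  have hg_deg : ∀ q, hg q ≠ 0 → B.deg q = -1 := by
    intro q hq
    by_cases h1 : (q : ℕ) < n
    · have hgv : hg q = H' (genr ⟨(q : ℕ), h1⟩) := by simp only [hgdef, dif_pos h1]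
      rw [hgv] at hq
      have hdeg : wdeg A.deg (FreeMonoid.of (⟨(q : ℕ), h1⟩ : Fin n)) = -1 := by
        by_contra hcon; exact hq (h'deg _ hcon)
      rw [wdeg_of] at hdeg
      have hq2 : q = Fin.castAdd 2 ⟨(q : ℕ), h1⟩ := Fin.ext rfl
      rw [hq2, hdegcompat]; exact hdeg
    · by_cases h2 : (q : ℕ) = n
      · exfalso; apply hq; simp only [hgdef, dif_neg h1, if_pos h2]
      · have hm : m = 0 := by
          have hx : e1.eps (genr (⟨n, by omega⟩ : Fin (n+2))) ≠ 0
              ∨ e2.eps (genr (⟨n, by omega⟩ : Fin (n+2))) ≠ 0 := by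
            by_contra hcon
            push_neg at hcon
            apply hq
            simp only [hgdef, dif_neg h1, if_neg h2]
            rw [hcon.1, hcon.2, add_zero]
          rcases hx with hx | hx
          · rw [← hdegx]; exact e1deg _ hx
          · rw [← hdegx]; exact e2deg _ hx
        have h3 : (q : ℕ) = n + 1 := by have := q.isLt; omega
        have hq3 : q = ⟨n + 1, by omega⟩ := Fin.ext h3
        rw [hq3, hdegy, hm]
        norm_num
  have hword_deg : ∀ l : List (Fin (n+2)),
      hword hg (fun q => e1.eps (genr q)) e2.eps l ≠ 0 → wdeg B.deg (FreeMonoid.ofList l) = -1 := by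
    intro l
    induction l with
    | nil => intro h; exact absurd rfl h
    | cons q l ih =>
      intro h
      rw [show FreeMonoid.ofList (q :: l) = FreeMonoid.of q * FreeMonoid.ofList l from rfl,
        wdeg_cons]
      have hsplit : hg q * e2.eps (MonoidAlgebra.single (FreeMonoid.ofList l) 1) ≠ 0
          ∨ e1.eps (genr q) * hword hg (fun q => e1.eps (genr q)) e2.eps l ≠ 0 := by
        by_contra hcon
        push_neg at hcon
        apply h
        show hg q * _ + _ * hword hg (fun q => e1.eps (genr q)) e2.eps l = 0
        rw [hcon.1, hcon.2, add_zero]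
      rcases hsplit with h' | h'
      · rw [hg_deg q (left_ne_zero_of_mul h'), eps_single_ne e2 _ (right_ne_zero_of_mul h'),
          add_zero]
      · rw [e1deg q (left_ne_zero_of_mul h'), ih (right_ne_zero_of_mul h'), zero_add]
  have degH : ∀ w, wdeg B.deg w ≠ -1 → H (MonoidAlgebra.single w 1) = 0 := by
    intro w hw
    rw [Hsingle]
    by_contra hcon
    exact hw (hword_deg _ hcon)
  exact ⟨H, degH, main_all, Hmul⟩
end Part1b

/-- Two augmentations of a stabilization `S(A)` are chain homotopic iff their restrictions
to `A` are; together with surjectivity of restriction this gives a bijection between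
homotopy classes of augmentations of `S(A)` and of `A`. -/
theorem stmt7 {n : ℕ} (m : ℤ) (A : DGA n) (B : DGA (n + 2))
    (hdegcompat : ∀ q : Fin n, B.deg (Fin.castAdd 2 q) = A.deg q)
    (hdegx : B.deg ⟨n, by omega⟩ = m)
    (hdegy : B.deg ⟨n + 1, by omega⟩ = m - 1)
    (hdx : B.d (genr ⟨n, by omega⟩) = genr ⟨n + 1, by omega⟩)
    (hdy : B.d (genr ⟨n + 1, by omega⟩) = 0)
    (hrestrict : ∀ a : FreeDGA n, B.d (inclTwo n a) = inclTwo n (A.d a)) :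
    (∀ e1 e2 : Aug B,
      (∃ H, IsHomotopy B e1.eps e2.eps H) ↔
        ∃ H' : FreeDGA n →ₗ[F2] F2,
          IsHomotopy A (e1.eps.comp (inclTwo n)) (e2.eps.comp (inclTwo n)) H') ∧
    (∀ eA : Aug A, ∃ eS : Aug B, ∀ a : FreeDGA n, eS.eps (inclTwo n a) = eA.eps a) := by
  constructor
  · intro e1 e2
    constructor
    · rintro ⟨H, hH⟩
      exact ⟨H.comp (inclTwo n).toLinearMap, part1_fwd A B hdegcompat hrestrict e1 e2 H hH⟩
    · rintro ⟨H', hH'⟩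
      exact part1_bwd m A B hdegcompat hdegx hdegy hdx hdy hrestrict e1 e2 H' hH'
  · exact part2 A B hdx hdy hdegcompat hrestrict
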